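/- Let (Z_n)_{n≥1} be a sequence of independent identically distributed real random variables with density ρ, and define W_1 = max(Z_1,0) and W_{n+1} = max(W_n + Z_{n+1}, 0). If ρ is strictly positive almost everywhere on ℝ (support(ρ) = ℝ), ∫_ℝ s ρ(s) ds < 0, and inf_{[-δ,δ]} ρ > 0 for some δ > 0, then (W_n)_{n≥1} is a nonevanescent time-homogeneous Markov process on [0,∞) whose transition function P, given by P_s(A) = ∫_{A∖{0}} ρ(x−s) dx + (∫_{(-∞,-s]} ρ) · δ_0(A), is strong Feller continuous, and for every s ∈ [0,∞) and every nonempty open set O ⊆ [0,∞), Σ_{n≥1} P^n_s((0,∞)^{n-1} × O) > 0. -/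

import Mathlib

open MeasureTheory ProbabilityTheory Filter Topology NNReal

noncomputable section

def iterK {S : Type*} [MeasurableSpace S] (κ : Kernel S S) :
    (n : ℕ) → S → Measure (Fin (n + 1) → S)
  | 0, s => (κ s).map (fun x _ => x)
  | n + 1, s => (iterK κ n s).bind fun p => (κ (p (Fin.last n))).map (Fin.snoc p)

def IsMarkovChain {Ω S : Type*} [MeasurableSpace Ω] [MeasurableSpace S]
    (Pr : Measure Ω) (κ : Kernel S S) (Sp : ℕ → Ω → S) : Prop :=
  (∀ n, Measurable (Sp n)) ∧
  ∀ (n : ℕ) (A : Set S), MeasurableSet A →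
    ∀ B : Set Ω,
      MeasurableSet[⨆ i : Fin (n + 1), MeasurableSpace.comap (Sp i) inferInstance] B →
      Pr (B ∩ Sp (n + 1) ⁻¹' A) = ∫⁻ ω in B, κ (Sp n ω) A ∂Pr

lemma toNNReal_of_max (a : ℝ≥0) (b : ℝ) (h : (a : ℝ) = max b 0) : a = Real.toNNReal b := by
  apply NNReal.coe_injective
  rw [Real.coe_toNNReal', h]

lemma image_coe_eq (A : Set ℝ≥0) :
    (((↑) : ℝ≥0 → ℝ) '' (A \ {0})) = {x : ℝ | 0 < x ∧ Real.toNNReal x ∈ A} := by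
  ext x
  constructor
  · rintro ⟨a, ⟨haA, ha0⟩, rfl⟩
    have : 0 < a := pos_iff_ne_zero.mpr ha0
    exact ⟨this, by simpa [Real.toNNReal_coe] using haA⟩
  · rintro ⟨hx, hA⟩
    exact ⟨Real.toNNReal x, ⟨hA, by simp [Real.toNNReal_eq_zero, hx, not_le.mpr hx]⟩,
      Real.coe_toNNReal x hx.le⟩

lemma kernel_map_eq (ρ : ℝ → ℝ) (hρmeas : Measurable ρ)
    (κ : Kernel ℝ≥0 ℝ≥0)
    (hκ : ∀ (s : ℝ≥0) (A : Set ℝ≥0), MeasurableSet A →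
      κ s A = (∫⁻ x in (((↑) : ℝ≥0 → ℝ) '' (A \ {0})), ENNReal.ofReal (ρ (x - s))) +
        (∫⁻ x in Set.Iic (-(s : ℝ)), ENNReal.ofReal (ρ x)) *
          A.indicator (fun _ => (1 : ENNReal)) 0) (s : ℝ≥0) :
    ((volume : Measure ℝ).withDensity (fun x => ENNReal.ofReal (ρ x))).map
      (fun z => Real.toNNReal ((s : ℝ) + z)) = κ s := by
  have hmg : Measurable (fun z : ℝ => Real.toNNReal ((s : ℝ) + z)) :=
    measurable_real_toNNReal.comp (measurable_const.add measurable_id)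
  ext A hA
  rw [Measure.map_apply hmg hA, hκ s A hA]
  set E : Set ℝ := ((↑) : ℝ≥0 → ℝ) '' (A \ {0}) with hE
  have hEdesc := image_coe_eq A
  have hmem : ∀ x : ℝ, x ∈ E ↔ 0 < x ∧ Real.toNNReal x ∈ A := fun x => by
    rw [hE, hEdesc]; rfl
  have hEmeas : MeasurableSet E := by
    rw [hE, hEdesc]
    exact measurableSet_Ioi.inter (measurable_real_toNNReal hA)
  have hint : ∫⁻ z in (fun z : ℝ => (s : ℝ) + z) ⁻¹' E, ENNReal.ofReal (ρ z) =
      ∫⁻ x in E, ENNReal.ofReal (ρ (x - (s : ℝ))) := by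
    have hmp : MeasurePreserving (fun z : ℝ => (s : ℝ) + z) volume volume :=
      measurePreserving_add_left volume (s : ℝ)
    have := hmp.setLIntegral_comp_preimage hEmeas
      (f := fun x => ENNReal.ofReal (ρ (x - (s : ℝ))))
      (hρmeas.comp (measurable_id.sub measurable_const)).ennreal_ofReal
    simpa using this
  rw [withDensity_apply _ (hmg hA)]
  by_cases h0 : (0 : ℝ≥0) ∈ A
  · have hset : (fun z : ℝ => Real.toNNReal ((s : ℝ) + z)) ⁻¹' A =
        ((fun z : ℝ => (s : ℝ) + z) ⁻¹' E) ∪ Set.Iic (-(s : ℝ)) := by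
      ext z
      simp only [Set.mem_preimage, Set.mem_union, Set.mem_Iic, hmem]
      constructor
      · intro hz
        rcases le_or_gt ((s : ℝ) + z) 0 with h | h
        · exact Or.inr (by linarith)
        · exact Or.inl ⟨h, hz⟩
      · rintro (⟨h1, h2⟩ | h)
        · exact h2
        · have : (s : ℝ) + z ≤ 0 := by linarith
          simpa [Real.toNNReal_of_nonpos this] using h0
    rw [hset, lintegral_union measurableSet_Iic]
    · rw [hint, Set.indicator_of_mem h0, mul_one]
    · apply Set.disjoint_left.mpr
      rintro z hz1 hz2
      rw [Set.mem_preimage, hmem] at hz1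
      simp only [Set.mem_Iic] at hz2
      have := hz1.1
      linarith
  · have hset : (fun z : ℝ => Real.toNNReal ((s : ℝ) + z)) ⁻¹' A =
        (fun z : ℝ => (s : ℝ) + z) ⁻¹' E := by
      ext z
      simp only [Set.mem_preimage, hmem]
      constructor
      · intro hz
        rcases le_or_gt ((s : ℝ) + z) 0 with h | h
        · exact absurd (by simpa [Real.toNNReal_of_nonpos h] using hz) h0
        · exact ⟨h, hz⟩
      · exact fun h => h.2
    rw [hset, hint, Set.indicator_of_notMem h0, mul_zero, add_zero]

lemma conv_diff_bound (h d : ℝ → ℝ) (hh : Measurable h) (C : ℝ) (hC : ∀ t, |h t| ≤ C)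
    (hd : Integrable d (volume : Measure ℝ)) (y : ℝ) :
    |(convolution h d (ContinuousLinearMap.lsmul ℝ ℝ) volume) y| ≤ C * ∫ t, |d t| := by
  have hdy : Integrable (fun t => d (y - t)) (volume : Measure ℝ) := hd.comp_sub_left y
  have hint : Integrable (fun t => h t * d (y - t)) (volume : Measure ℝ) :=
    hdy.bdd_mul hh.aestronglyMeasurable (Filter.Eventually.of_forall fun t => by simpa using hC t)
  have : (convolution h d (ContinuousLinearMap.lsmul ℝ ℝ) volume) y
      = ∫ t, h t * d (y - t) := by
    simp [convolution, ContinuousLinearMap.lsmul_apply, smul_eq_mul]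
  rw [this]
  calc |∫ t, h t * d (y - t)| ≤ ∫ t, |h t * d (y - t)| :=
        by
        have := norm_integral_le_integral_norm (μ := (volume : Measure ℝ))
          (fun t => h t * d (y - t))
        simpa only [Real.norm_eq_abs] using this
    _ ≤ ∫ t, C * |d (y - t)| := by
        apply integral_mono_of_nonneg (Filter.Eventually.of_forall fun t => abs_nonneg _)
          ((hdy.abs.const_mul C))
        refine Filter.Eventually.of_forall fun t => ?_
        show |h t * d (y - t)| ≤ C * |d (y - t)|
        rw [abs_mul]
        exact mul_le_mul_of_nonneg_right (hC t) (abs_nonneg _)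
    _ = C * ∫ t, |d (y - t)| := by rw [MeasureTheory.integral_const_mul]
    _ = C * ∫ t, |d t| := by rw [integral_sub_left_eq_self (fun t => |d t|) volume y]

lemma strong_feller (ρ : ℝ → ℝ) (hρmeas : Measurable ρ) (hρpos : 0 ≤ ρ)
    (hρint : Integrable ρ (volume : Measure ℝ))
    (κ : Kernel ℝ≥0 ℝ≥0)
    (hκ : ∀ (s : ℝ≥0) (A : Set ℝ≥0), MeasurableSet A →
      κ s A = (∫⁻ x in (((↑) : ℝ≥0 → ℝ) '' (A \ {0})), ENNReal.ofReal (ρ (x - s))) +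
        (∫⁻ x in Set.Iic (-(s : ℝ)), ENNReal.ofReal (ρ x)) *
          A.indicator (fun _ => (1 : ENNReal)) 0)
    (f : ℝ≥0 → ℝ) (hf : Measurable f) (C : ℝ) (hfC : ∀ x, |f x| ≤ C) :
    Continuous fun s : ℝ≥0 => ∫ x, f x ∂(κ s) := by
  have hC0 : (0:ℝ) ≤ C := le_trans (abs_nonneg _) (hfC 0)
  set h : ℝ → ℝ := fun t => f (Real.toNNReal t) with hh_def
  have hh : Measurable h := hf.comp measurable_real_toNNReal
  have hhC : ∀ t, |h t| ≤ C := fun t => hfC _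
  set d : ℝ → ℝ := fun t => ρ (-t) with hd_def
  have hdmeas : Measurable d := hρmeas.comp measurable_neg
  have hdint : Integrable d (volume : Measure ℝ) := hρint.comp_neg
  set F := convolution h d (ContinuousLinearMap.lsmul ℝ ℝ) volume with hF_def
  -- step A: the integral equals F ∘ coe
  have key : ∀ s : ℝ≥0, ∫ x, f x ∂(κ s) = F (s : ℝ) := by
    intro s
    have hmg : Measurable (fun z : ℝ => Real.toNNReal ((s : ℝ) + z)) :=
      measurable_real_toNNReal.comp (measurable_const.add measurable_id)
    rw [← kernel_map_eq ρ hρmeas κ hκ s,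
      integral_map hmg.aemeasurable (hf.stronglyMeasurable.aestronglyMeasurable)]
    have hden : (fun x : ℝ => ENNReal.ofReal (ρ x)) =
        fun x => ((Real.toNNReal (ρ x) : ℝ≥0) : ENNReal) := rfl
    have hm : Measurable (fun x : ℝ => Real.toNNReal (ρ x)) :=
      measurable_real_toNNReal.comp hρmeas
    rw [hden, integral_withDensity_eq_integral_smul hm
      (fun z => f (Real.toNNReal ((s : ℝ) + z)))]
    have h1 : ∀ z : ℝ, (Real.toNNReal (ρ z)) • f (Real.toNNReal ((s : ℝ) + z)) =
        (fun t => ρ (t - (s : ℝ)) * h t) (z + (s : ℝ)) := by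
      intro z
      show (Real.toNNReal (ρ z)) • f (Real.toNNReal ((s : ℝ) + z))
        = ρ (z + (s : ℝ) - (s : ℝ)) * f (Real.toNNReal (z + (s : ℝ)))
      rw [NNReal.smul_def, smul_eq_mul, Real.coe_toNNReal _ (hρpos z)]
      ring_nf
    simp_rw [h1]
    rw [integral_add_right_eq_self (fun t => ρ (t - (s : ℝ)) * h t) (s : ℝ)]
    rw [hF_def]
    simp only [convolution, ContinuousLinearMap.lsmul_apply, smul_eq_mul]
    congr 1
    funext t
    show ρ (t - (s : ℝ)) * h t = h t * d ((s : ℝ) - t)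
    rw [hd_def]
    show ρ (t - (s : ℝ)) * h t = h t * ρ (-((s : ℝ) - t))
    rw [neg_sub, mul_comm]
  -- step B: F is continuous
  have hloc : LocallyIntegrable h (volume : Measure ℝ) := by
    intro x
    refine ⟨Metric.closedBall x 1, Metric.closedBall_mem_nhds x one_pos, ?_⟩
    have hconst : IntegrableOn (fun _ : ℝ => C) (Metric.closedBall x 1) volume :=
      integrableOn_const (measure_closedBall_lt_top).ne
    exact Integrable.mono' hconst hh.aestronglyMeasurable.restrict
      (Filter.Eventually.of_forall fun t => by simpa [Real.norm_eq_abs] using hhC t)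
  choose g hg1 hg2 hg3 hg4 using fun n : ℕ =>
    hdint.exists_hasCompactSupport_integral_sub_le
      (ε := 1/((n:ℝ)+1)) (by positivity)
  have hFn_cont : ∀ n, Continuous
      (convolution h (g n) (ContinuousLinearMap.lsmul ℝ ℝ) volume) := fun n =>
    (hg1 n).continuous_convolution_right _ hloc (hg3 n)
  have hbound : ∀ n y,
      |F y - convolution h (g n) (ContinuousLinearMap.lsmul ℝ ℝ) volume y| ≤
        C * (1/((n:ℝ)+1)) := by
    intro n y
    have hdiff : F y - convolution h (g n) (ContinuousLinearMap.lsmul ℝ ℝ) volume y =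
        convolution h (fun t => d t - g n t) (ContinuousLinearMap.lsmul ℝ ℝ) volume y := by
      simp only [hF_def, convolution, ContinuousLinearMap.lsmul_apply, smul_eq_mul, mul_sub]
      rw [← integral_sub]
      · exact (hdint.comp_sub_left y).bdd_mul hh.aestronglyMeasurable
          (Filter.Eventually.of_forall fun t => by simpa [Real.norm_eq_abs] using hhC t)
      · exact ((hg4 n).comp_sub_left y).bdd_mul hh.aestronglyMeasurable
          (Filter.Eventually.of_forall fun t => by simpa [Real.norm_eq_abs] using hhC t)
    rw [hdiff]
    calc |convolution h (fun t => d t - g n t) (ContinuousLinearMap.lsmul ℝ ℝ) volume y|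
        ≤ C * ∫ t, |d t - g n t| :=
          conv_diff_bound h _ hh C hhC (hdint.sub (hg4 n)) y
      _ ≤ C * (1/((n:ℝ)+1)) := by
          apply mul_le_mul_of_nonneg_left _ hC0
          simpa [Real.norm_eq_abs] using hg2 n
  have huni : TendstoUniformly
      (fun n => convolution h (g n) (ContinuousLinearMap.lsmul ℝ ℝ) volume) F atTop := by
    rw [Metric.tendstoUniformly_iff]
    intro ε hε
    have htend : Tendsto (fun n : ℕ => C * (1/((n:ℝ)+1))) atTop (𝓝 0) := by
      have := tendsto_one_div_add_atTop_nhds_zero_nat (𝕜 := ℝ)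
      simpa using (this.const_mul C)
    have := htend.eventually (eventually_lt_nhds hε)
    filter_upwards [this] with n hn y
    rw [Real.dist_eq]
    calc |F y - convolution h (g n) (ContinuousLinearMap.lsmul ℝ ℝ) volume y| ≤
        C * (1/((n:ℝ)+1)) := hbound n y
      _ < ε := by simpa using hn
  have hFcont : Continuous F :=
    huni.continuous (Filter.Eventually.of_forall hFn_cont).frequently
  have : (fun s : ℝ≥0 => ∫ x, f x ∂(κ s)) = F ∘ ((↑) : ℝ≥0 → ℝ) := funext key
  rw [this]
  exact hFcont.comp NNReal.continuous_coe

def Vf : ℕ → (ℕ → ℝ) → ℝ≥0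
  | 0, t => Real.toNNReal (t 0)
  | (n+1), t => Real.toNNReal ((Vf n t : ℝ) + t (n+1))

lemma Vf_meas : ∀ n, Measurable (Vf n) := by
  intro n
  induction n with
  | zero => exact measurable_real_toNNReal.comp (measurable_pi_apply 0)
  | succ n ih =>
    exact measurable_real_toNNReal.comp
      ((NNReal.continuous_coe.measurable.comp ih).add (measurable_pi_apply (n+1)))

lemma Vf_congr {n : ℕ} {t t' : ℕ → ℝ} (h : ∀ i ≤ n, t i = t' i) : Vf n t = Vf n t' := by
  induction n with
  | zero => simp [Vf, h 0 le_rfl]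
  | succ n ih =>
    have h1 := ih (fun i hi => h i (hi.trans (Nat.le_succ n)))
    simp [Vf, h1, h (n+1) le_rfl]

lemma markov_chain
    {Ω : Type*} [MeasurableSpace Ω] (Pr : Measure Ω) [IsProbabilityMeasure Pr]
    (Z : ℕ → Ω → ℝ) (hZmeas : ∀ n, Measurable (Z n))
    (hindep : iIndepFun Z Pr)
    (ρ : ℝ → ℝ) (hρmeas : Measurable ρ)
    (hdens : ∀ n, Pr.map (Z n) = volume.withDensity fun x => ENNReal.ofReal (ρ x))
    (W : ℕ → Ω → ℝ≥0)
    (hW0 : ∀ ω, (W 0 ω : ℝ) = max (Z 0 ω) 0)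
    (hWrec : ∀ n ω, (W (n + 1) ω : ℝ) = max ((W n ω : ℝ) + Z (n + 1) ω) 0)
    (κ : Kernel ℝ≥0 ℝ≥0)
    (hκ : ∀ (s : ℝ≥0) (A : Set ℝ≥0), MeasurableSet A →
      κ s A = (∫⁻ x in (((↑) : ℝ≥0 → ℝ) '' (A \ {0})), ENNReal.ofReal (ρ (x - s))) +
        (∫⁻ x in Set.Iic (-(s : ℝ)), ENNReal.ofReal (ρ x)) *
          A.indicator (fun _ => (1 : ENNReal)) 0) :
    IsMarkovChain Pr κ W := by
  have hWV : ∀ n ω, W n ω = Vf n (fun i => Z i ω) := by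
    intro n
    induction n with
    | zero => intro ω; exact toNNReal_of_max _ _ (hW0 ω)
    | succ n ih =>
      intro ω
      have := toNNReal_of_max _ _ (hWrec n ω)
      rw [this, ih ω]
      rfl
  constructor
  · intro n
    have : W n = Vf n ∘ (fun ω i => Z i ω) := funext fun ω => hWV n ω
    rw [this]
    exact (Vf_meas n).comp (measurable_pi_lambda _ fun i => hZmeas i)
  intro n A hA B hB
  -- the tuple map
  set T : Ω → (Fin (n+1) → ℝ) := fun ω i => Z i ω with hT_def
  have hT : Measurable T := measurable_pi_lambda _ fun i => hZmeas i
  -- extension of finite tuples to sequences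
  set ext : (Fin (n+1) → ℝ) → (ℕ → ℝ) :=
    fun p j => if h : j < n + 1 then p ⟨j, h⟩ else 0 with hext_def
  have hext_meas : Measurable ext := by
    apply measurable_pi_lambda
    intro j
    by_cases h : j < n + 1
    · simp only [hext_def, dif_pos h]; exact measurable_pi_apply (⟨j, h⟩ : Fin (n+1))
    · simp only [hext_def, dif_neg h]; exact measurable_const
  set V' : Fin (n+1) → (Fin (n+1) → ℝ) → ℝ≥0 :=
    fun i p => Vf i (ext p) with hV'_def
  have hV'_meas : ∀ i, Measurable (V' i) := fun i => (Vf_meas i).comp hext_meas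
  have hWT : ∀ (i : Fin (n+1)) ω, W i ω = V' i (T ω) := by
    intro i ω
    rw [hWV i ω]
    apply Vf_congr
    intro j hj
    have hjn : j < n + 1 := lt_of_le_of_lt hj i.isLt
    simp [hext_def, hT_def, hjn]
    exact fun h => absurd hjn (by omega)
  -- B is a preimage under T
  have hcomap : MeasurableSet[MeasurableSpace.comap T inferInstance] B := by
    refine (iSup_le fun i => ?_ :
      (⨆ i : Fin (n + 1), MeasurableSpace.comap (W i) inferInstance) ≤
        MeasurableSpace.comap T inferInstance) B hB
    have : (W i : Ω → ℝ≥0) = V' i ∘ T := funext fun ω => hWT i ω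
    rw [this, ← MeasurableSpace.comap_comp]
    exact MeasurableSpace.comap_mono ((measurable_iff_comap_le).mp (hV'_meas i))
  obtain ⟨B'', hB'', rfl⟩ := hcomap
  -- independence
  have hindepTZ : IndepFun T (Z (n+1)) Pr := by
    have base := hindep.indepFun_finset (Finset.range (n+1)) {n+1}
      (by simp [Finset.disjoint_left]; omega) hZmeas
    have hφ : Measurable (fun q : ((Finset.range (n+1) : Finset ℕ) → ℝ) =>
        (fun i : Fin (n+1) => q ⟨(i : ℕ), by simp [i.isLt]⟩)) :=
      measurable_pi_lambda _ fun i => measurable_pi_apply _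
    have hψ : Measurable (fun q : (({n+1} : Finset ℕ) → ℝ) =>
        q ⟨n+1, by simp⟩) := measurable_pi_apply _
    have := base.comp hφ hψ
    exact this
  -- the joint law is a product
  set ξ : Ω → (Fin (n+1) → ℝ) × ℝ := fun ω => (T ω, Z (n+1) ω) with hξ_def
  have hξm : Measurable ξ := hT.prodMk (hZmeas (n+1))
  have hmap : Pr.map ξ = (Pr.map T).prod (Pr.map (Z (n+1))) :=
    (indepFun_iff_map_prod_eq_prod_map_map hT.aemeasurable
      (hZmeas (n+1)).aemeasurable).mp hindepTZ
  -- event as preimage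
  set lastV : (Fin (n+1) → ℝ) → ℝ≥0 := V' (Fin.last n) with hlastV_def
  set C : Set ((Fin (n+1) → ℝ) × ℝ) :=
    {q | q.1 ∈ B'' ∧ Real.toNNReal ((lastV q.1 : ℝ) + q.2) ∈ A} with hC_def
  have hCmeas : MeasurableSet C := by
    have h1 : MeasurableSet (Prod.fst ⁻¹' B'' : Set ((Fin (n+1) → ℝ) × ℝ)) :=
      measurable_fst hB''
    have hm2 : Measurable (fun q : (Fin (n+1) → ℝ) × ℝ =>
        Real.toNNReal ((lastV q.1 : ℝ) + q.2)) :=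
      measurable_real_toNNReal.comp
        ((NNReal.continuous_coe.measurable.comp
          ((hV'_meas (Fin.last n)).comp measurable_fst)).add measurable_snd)
    exact h1.inter (hm2 hA)
  have hevent : (T ⁻¹' B'') ∩ W (n+1) ⁻¹' A = ξ ⁻¹' C := by
    ext ω
    simp only [Set.mem_inter_iff, Set.mem_preimage, hC_def, Set.mem_setOf_eq, hξ_def]
    have hW' : W (n+1) ω = Real.toNNReal ((W n ω : ℝ) + Z (n+1) ω) :=
      toNNReal_of_max _ _ (hWrec n ω)
    have hlw : lastV (T ω) = W n ω := by
      rw [hlastV_def, ← hWT (Fin.last n) ω]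
      simp
    constructor
    · rintro ⟨h1, h2⟩
      refine ⟨h1, ?_⟩
      rw [hlw, ← hW']
      exact h2
    · rintro ⟨h1, h2⟩
      refine ⟨h1, ?_⟩
      rw [hW']
      rwa [hlw] at h2
  rw [hevent, ← Measure.map_apply hξm hCmeas, hmap, Measure.prod_apply hCmeas]
  -- slices
  have hslice : ∀ p : Fin (n+1) → ℝ, (Pr.map (Z (n+1))) (Prod.mk p ⁻¹' C) =
      Set.indicator B'' (fun p => κ (lastV p) A) p := by
    intro p
    by_cases hp : p ∈ B''
    · rw [Set.indicator_of_mem hp]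
      have hsets : Prod.mk p ⁻¹' C =
          (fun z : ℝ => Real.toNNReal ((lastV p : ℝ) + z)) ⁻¹' A := by
        ext z
        simp [hC_def, hp]
      have hmz : Measurable (fun z : ℝ => Real.toNNReal ((lastV p : ℝ) + z)) :=
        measurable_real_toNNReal.comp (measurable_const.add measurable_id)
      rw [hsets, hdens (n+1), ← kernel_map_eq ρ hρmeas κ hκ (lastV p)]
      exact (Measure.map_apply hmz hA).symm
    · rw [Set.indicator_of_notMem hp]
      have hsets : Prod.mk p ⁻¹' C = ∅ := by
        ext z; simp [hC_def, hp]
      rw [hsets]; simp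
  rw [lintegral_congr hslice, lintegral_indicator hB'']
  have hκmeas : Measurable (fun p : Fin (n+1) → ℝ => κ (lastV p) A) :=
    (Kernel.measurable_coe κ hA).comp (hV'_meas (Fin.last n))
  rw [setLIntegral_map hB'' hκmeas hT]
  exact lintegral_congr fun ω => by
    rw [show lastV (T ω) = W n ω by rw [hlastV_def, ← hWT (Fin.last n) ω]; simp]

lemma nonevanescent
    {Ω : Type*} [MeasurableSpace Ω] (Pr : Measure Ω) [IsProbabilityMeasure Pr]
    (Z : ℕ → Ω → ℝ) (hZmeas : ∀ n, Measurable (Z n))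
    (hindep : iIndepFun Z Pr)
    (ρ : ℝ → ℝ) (hρmeas : Measurable ρ) (hρpos : 0 ≤ ρ)
    (hdens : ∀ n, Pr.map (Z n) = volume.withDensity fun x => ENNReal.ofReal (ρ x))
    (hmean : ∫ s, s * ρ s < 0)
    (W : ℕ → Ω → ℝ≥0)
    (hWrec : ∀ n ω, (W (n + 1) ω : ℝ) = max ((W n ω : ℝ) + Z (n + 1) ω) 0) :
    ∀ᵐ ω ∂Pr, ∃ K : Set ℝ≥0, IsCompact K ∧ ∀ m : ℕ, ∃ n ≥ m, W n ω ∈ K := by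
  -- integrability of the mean
  have hInt : Integrable (fun s : ℝ => s * ρ s) (volume : Measure ℝ) := by
    by_contra h
    rw [integral_undef h] at hmean
    exact lt_irrefl 0 hmean
  have hρnn : Measurable (fun x : ℝ => Real.toNNReal (ρ x)) :=
    measurable_real_toNNReal.comp hρmeas
  have hden : (fun x : ℝ => ENNReal.ofReal (ρ x)) =
      fun x => ((Real.toNNReal (ρ x) : ℝ≥0) : ENNReal) := rfl
  -- Z 0 is integrable
  have hZint : Integrable (Z 0) Pr := by
    have h1 : Integrable (fun x : ℝ => x)
        ((volume : Measure ℝ).withDensity fun x => ENNReal.ofReal (ρ x)) := by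
      rw [hden, integrable_withDensity_iff_integrable_smul hρnn]
      apply hInt.congr
      refine Filter.Eventually.of_forall fun x => ?_
      show x * ρ x = (ρ x).toNNReal • x
      rw [NNReal.smul_def, smul_eq_mul, Real.coe_toNNReal _ (hρpos x), mul_comm]
    rw [← hdens 0] at h1
    exact (integrable_map_measure aestronglyMeasurable_id (hZmeas 0).aemeasurable).mp h1
  -- the mean of Z 0
  have hEZ : ∫ ω, Z 0 ω ∂Pr = ∫ s, s * ρ s := by
    have h1 : ∫ ω, Z 0 ω ∂Pr = ∫ x, x ∂(Pr.map (Z 0)) :=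
      (integral_map (hZmeas 0).aemeasurable aestronglyMeasurable_id).symm
    rw [h1, hdens 0, hden, integral_withDensity_eq_integral_smul hρnn]
    congr 1
    funext x
    rw [NNReal.smul_def, smul_eq_mul, Real.coe_toNNReal _ (hρpos x), mul_comm]
  -- strong law of large numbers
  have hSLLN := strong_law_ae (μ := Pr) Z hZint
    (fun i j hij => hindep.indepFun hij)
    (fun i => ⟨(hZmeas i).aemeasurable, (hZmeas 0).aemeasurable, by rw [hdens i, hdens 0]⟩)
  filter_upwards [hSLLN] with ω hω
  set m₀ : ℝ := ∫ ω, Z 0 ω ∂Pr with hm₀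
  have hm₀neg : m₀ < 0 := by rw [hEZ]; exact hmean
  set S : ℕ → ℝ := fun j => ∑ i ∈ Finset.range j, Z i ω with hS_def
  -- S tends to -∞
  have hStend : Tendsto S atTop atBot := by
    have h2 : ∀ᶠ n : ℕ in atTop, (n : ℝ)⁻¹ • S n < m₀ / 2 :=
      hω.eventually (eventually_lt_nhds (by linarith))
    have h3 : ∀ᶠ n : ℕ in atTop, S n ≤ (n : ℝ) * (m₀ / 2) := by
      filter_upwards [h2, eventually_ge_atTop 1] with n hn hn1
      have hnpos : (0 : ℝ) < n := by exact_mod_cast hn1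
      have : S n = (n : ℝ) * ((n : ℝ)⁻¹ • S n) := by
        rw [smul_eq_mul, ← mul_assoc, mul_inv_cancel₀ hnpos.ne', one_mul]
      rw [this]
      exact mul_le_mul_of_nonneg_left hn.le hnpos.le
    have h4 : Tendsto (fun n : ℕ => (n : ℝ) * (m₀ / 2)) atTop atBot :=
      Tendsto.atTop_mul_const_of_neg (by linarith) tendsto_natCast_atTop_atTop
    exact tendsto_atBot_mono' atTop h3 h4
  -- dichotomy
  by_cases hcase : ∀ m : ℕ, ∃ n ≥ m, W n ω = 0
  · refine ⟨{0}, isCompact_singleton, fun m => ?_⟩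
    obtain ⟨n, hn, h0⟩ := hcase m
    exact ⟨n, hn, by simp [h0]⟩
  · exfalso
    push_neg at hcase
    obtain ⟨m, hm⟩ := hcase
    -- for n ≥ m the walk follows the free random walk
    have hclaim : ∀ k : ℕ, (W (m + k) ω : ℝ) = (W m ω : ℝ) + (S (m + k + 1) - S (m + 1)) := by
      intro k
      induction k with
      | zero => simp
      | succ k ih =>
        have hne : W (m + k + 1) ω ≠ 0 := hm (m + k + 1) (by omega)
        have hrec := hWrec (m + k) ω
        have hpos : (0 : ℝ) < (W (m + k + 1) ω : ℝ) := by
          have := NNReal.coe_pos.mpr (pos_iff_ne_zero.mpr hne)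
          exact this
        have heq : (W (m + k + 1) ω : ℝ) = (W (m + k) ω : ℝ) + Z (m + k + 1) ω := by
          rcases le_or_gt ((W (m + k) ω : ℝ) + Z (m + k + 1) ω) 0 with h | h
          · rw [hrec, max_eq_right h] at hpos; exact absurd hpos (lt_irrefl 0)
          · rw [hrec, max_eq_left h.le]
        have hSsucc : S (m + k + 2) = S (m + k + 1) + Z (m + k + 1) ω := by
          rw [hS_def]
          exact Finset.sum_range_succ _ _
        have : m + (k + 1) = m + k + 1 := by omega
        rw [this, heq, ih]
        have : m + k + 1 + 1 = m + k + 2 := by omega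
        rw [this, hSsucc]
        ring
    -- contradiction with S → -∞
    have hev := hStend.eventually (eventually_lt_atBot (S (m + 1) - (W m ω : ℝ)))
    obtain ⟨N, hN⟩ := eventually_atTop.mp hev
    set j' : ℕ := max N (m + 1) with hj'
    have hj'N : N ≤ j' := le_max_left _ _
    have hj'm : m + 1 ≤ j' := le_max_right _ _
    set k : ℕ := j' - (m + 1) with hk
    have hmk : m + k + 1 = j' := by omega
    have := hclaim k
    have hS' := hN j' hj'N
    rw [hmk] at this
    have hWnn : (0 : ℝ) ≤ (W (m + k) ω : ℝ) := (W (m + k) ω).coe_nonneg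
    rw [this] at hWnn
    linarith

lemma discrimination (ρ : ℝ → ℝ) (hρmeas : Measurable ρ)
    (hsupp : ∀ᵐ x ∂(volume : Measure ℝ), 0 < ρ x)
    (κ : Kernel ℝ≥0 ℝ≥0)
    (hκ : ∀ (s : ℝ≥0) (A : Set ℝ≥0), MeasurableSet A →
      κ s A = (∫⁻ x in (((↑) : ℝ≥0 → ℝ) '' (A \ {0})), ENNReal.ofReal (ρ (x - s))) +
        (∫⁻ x in Set.Iic (-(s : ℝ)), ENNReal.ofReal (ρ x)) *
          A.indicator (fun _ => (1 : ENNReal)) 0)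
    (s : ℝ≥0) (O : Set ℝ≥0) (hO : IsOpen O) (hOne : O.Nonempty) :
    0 < ∑' n : ℕ, iterK κ n s
        {p : Fin (n + 1) → ℝ≥0 |
          (∀ i : Fin (n + 1), (i : ℕ) < n → 0 < p i) ∧ p (Fin.last n) ∈ O} := by
  -- the 0-th term equals κ s O
  have hterm0 : iterK κ 0 s
      {p : Fin 1 → ℝ≥0 | (∀ i : Fin 1, (i : ℕ) < 0 → 0 < p i) ∧ p (Fin.last 0) ∈ O} =
      κ s O := by
    have hsets : {p : Fin 1 → ℝ≥0 | (∀ i : Fin 1, (i : ℕ) < 0 → 0 < p i) ∧ p (Fin.last 0) ∈ O}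
        = (fun p : Fin 1 → ℝ≥0 => p (Fin.last 0)) ⁻¹' O := by
      ext p; simp
    have ht : Measurable (fun (x : ℝ≥0) (_ : Fin 1) => x) :=
      measurable_pi_lambda _ fun _ => measurable_id
    show ((κ s).map (fun x _ => x)) _ = _
    rw [hsets, Measure.map_apply ht ((measurable_pi_apply _) hO.measurableSet)]
    rfl
  -- κ s O is positive
  have hpos : 0 < κ s O := by
    rw [hκ s O hO.measurableSet]
    have hEdesc := image_coe_eq O
    -- O \ {0} is nonempty
    obtain ⟨b, hbO, hb0⟩ : ∃ b : ℝ≥0, b ∈ O ∧ b ≠ 0 := by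
      obtain ⟨a, ha⟩ := hOne
      rcases eq_or_ne a 0 with rfl | h
      · obtain ⟨ε, hε, hball⟩ := Metric.isOpen_iff.mp hO 0 ha
        refine ⟨Real.toNNReal (ε / 2), hball ?_, ?_⟩
        · simp only [Metric.mem_ball]
          rw [NNReal.dist_eq]
          simp [Real.coe_toNNReal (ε/2) (by linarith), abs_of_nonneg (by linarith : (0:ℝ) ≤ ε/2)]
          linarith
        · simp [Real.toNNReal_eq_zero]; linarith
      · exact ⟨a, ha, h⟩
    have hEopen : IsOpen (((↑) : ℝ≥0 → ℝ) '' (O \ {0})) := by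
      rw [hEdesc]
      exact isOpen_Ioi.inter (hO.preimage continuous_real_toNNReal)
    set E : Set ℝ := ((↑) : ℝ≥0 → ℝ) '' (O \ {0}) with hE
    have hEne : E.Nonempty := ⟨(b : ℝ), ⟨b, ⟨hbO, hb0⟩, rfl⟩⟩
    have hEvol : 0 < (volume : Measure ℝ) E := hEopen.measure_pos volume hEne
    have hposint : 0 < ∫⁻ x in E, ENNReal.ofReal (ρ (x - (s : ℝ))) := by
      by_contra h
      push_neg at h
      have hzero : ∫⁻ x in E, ENNReal.ofReal (ρ (x - (s : ℝ))) = 0 := le_antisymm h zero_le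
      have hmeas : Measurable fun x : ℝ => ENNReal.ofReal (ρ (x - (s : ℝ))) :=
        (hρmeas.comp (measurable_id.sub measurable_const)).ennreal_ofReal
      rw [lintegral_eq_zero_iff hmeas] at hzero
      have hsupp' : ∀ᵐ x ∂(volume : Measure ℝ), 0 < ρ (x - (s : ℝ)) := by
        have hmp : MeasurePreserving (fun x : ℝ => x - (s : ℝ)) volume volume :=
          measurePreserving_sub_right volume (s : ℝ)
        exact hmp.quasiMeasurePreserving.ae (by exact hsupp)
      have hsupp'' := ae_restrict_of_ae (μ := volume) (s := E) hsupp'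
      have : ∀ᵐ x ∂((volume : Measure ℝ).restrict E), False := by
        filter_upwards [hzero, hsupp''] with x h1 h2
        simp only [Pi.zero_apply, ENNReal.ofReal_eq_zero] at h1
        exact absurd h1 (not_le.mpr h2)
      rw [ae_iff] at this
      simp only [not_false_iff, Set.setOf_true] at this
      rw [Measure.restrict_apply_univ] at this
      exact absurd this hEvol.ne'
    calc (0 : ENNReal) < ∫⁻ x in E, ENNReal.ofReal (ρ (x - (s : ℝ))) := hposint
      _ ≤ _ := le_add_right le_rfl
  calc (0 : ENNReal) < κ s O := hpos
    _ = _ := hterm0.symm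
    _ ≤ _ := ENNReal.le_tsum 0

/-- (reflected random walk on `[0, ∞)`). For an i.i.d. sequence with an
almost everywhere positive density `ρ` of negative mean, bounded below away from `0` on
a neighbourhood of `0`, the reflected random walk `W_{n+1} = max(W_n + Z_{n+1}, 0)` is a
nonevanescent time-homogeneous Markov process whose transition function
`P_s(A) = ∫_{A∖{0}} ρ(x-s) dx + ρ((-∞,-s]) δ_0(A)` is strong Feller continuous, and
every nonempty open set is reached with positive probability from every state through
`(0, ∞)`. -/
theorem statement17
    {Ω : Type*} [MeasurableSpace Ω] (Pr : Measure Ω) [IsProbabilityMeasure Pr]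
    (Z : ℕ → Ω → ℝ) (hZmeas : ∀ n, Measurable (Z n))
    (hindep : iIndepFun Z Pr)
    (ρ : ℝ → ℝ) (hρmeas : Measurable ρ) (hρpos : 0 ≤ ρ)
    (hdens : ∀ n, Pr.map (Z n) = volume.withDensity fun x => ENNReal.ofReal (ρ x))
    (hsupp : ∀ᵐ x ∂(volume : Measure ℝ), 0 < ρ x)
    (hmean : ∫ s, s * ρ s < 0)
    (δ : ℝ) (hδ : 0 < δ) (hinf : ∃ c : ℝ, 0 < c ∧ ∀ x ∈ Set.Icc (-δ) δ, c ≤ ρ x)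
    (W : ℕ → Ω → ℝ≥0)
    (hW0 : ∀ ω, (W 0 ω : ℝ) = max (Z 0 ω) 0)
    (hWrec : ∀ n ω, (W (n + 1) ω : ℝ) = max ((W n ω : ℝ) + Z (n + 1) ω) 0)
    (κ : Kernel ℝ≥0 ℝ≥0) [IsMarkovKernel κ]
    (hκ : ∀ (s : ℝ≥0) (A : Set ℝ≥0), MeasurableSet A →
      κ s A = (∫⁻ x in (((↑) : ℝ≥0 → ℝ) '' (A \ {0})), ENNReal.ofReal (ρ (x - s))) +
        (∫⁻ x in Set.Iic (-(s : ℝ)), ENNReal.ofReal (ρ x)) *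
          A.indicator (fun _ => (1 : ENNReal)) 0) :
    -- `(W_n)` is a time-homogeneous Markov process with transition function `κ`
    IsMarkovChain Pr κ W ∧
    -- `(W_n)` is nonevanescent
    (∀ᵐ ω ∂Pr, ∃ K : Set ℝ≥0, IsCompact K ∧ ∀ m : ℕ, ∃ n ≥ m, W n ω ∈ K) ∧
    -- `κ` is strong Feller continuous
    (∀ f : ℝ≥0 → ℝ, Measurable f → (∃ C : ℝ, ∀ x, |f x| ≤ C) →
      Continuous fun s => ∫ x, f x ∂(κ s)) ∧
    -- discrimination: every nonempty open set is reachable through `(0, ∞)`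
    (∀ (s : ℝ≥0) (O : Set ℝ≥0), IsOpen O → O.Nonempty →
      0 < ∑' n : ℕ, iterK κ n s
        {p : Fin (n + 1) → ℝ≥0 |
          (∀ i : Fin (n + 1), (i : ℕ) < n → 0 < p i) ∧ p (Fin.last n) ∈ O}) := by
  have hρint : Integrable ρ (volume : Measure ℝ) := by
    have hprob : IsProbabilityMeasure (Pr.map (Z 0)) :=
      Measure.isProbabilityMeasure_map (hZmeas 0).aemeasurable
    have huniv : ((volume : Measure ℝ).withDensity fun x => ENNReal.ofReal (ρ x))
        Set.univ = 1 := by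
      rw [← hdens 0]; exact measure_univ
    rw [withDensity_apply _ MeasurableSet.univ, setLIntegral_univ] at huniv
    refine ⟨hρmeas.aestronglyMeasurable, ?_⟩
    rw [hasFiniteIntegral_iff_ofReal (Filter.Eventually.of_forall hρpos)]
    rw [huniv]
    exact ENNReal.one_lt_top
  refine ⟨markov_chain Pr Z hZmeas hindep ρ hρmeas hdens W hW0 hWrec κ hκ,
    nonevanescent Pr Z hZmeas hindep ρ hρmeas hρpos hdens hmean W hWrec,
    fun f hf hC => ?_,
    fun s O hO hOne => discrimination ρ hρmeas hsupp κ hκ s O hO hOne⟩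
  obtain ⟨C, hC⟩ := hC
  exact strong_feller ρ hρmeas hρpos hρint κ hκ f hf C hC
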